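/- Let P be an n×n row-stochastic real matrix with absorbing states A = {a | P a a = 1}, and assume every state can reach some absorbing state. Let T = Aᶜ, let Q be the T×T submatrix of P, and let N = (I − Q)^{-1} be the fundamental matrix. Define the vector t indexed by T by t_i = ∑_{j ∈ T} n_{ij}, i.e., t = N·c where c is the all-ones column vector on T. Then t_i = ∑_{k=0}^∞ ∑_{j ∈ T} (Q^k)_{ij} (the series converges) and t satisfies the linear system (I − Q)·t = c, equivalently t = c + Q·t; t_i is the expected number of steps before the chain is absorbed, given that it starts in transient state i. -/

import Mathlib

open Finset

attribute [local instance] Classical.propDecidable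

variable {ι : Type*} [Fintype ι] [DecidableEq ι]

lemma aux_pow_nonneg (Q : Matrix ι ι ℝ) (h : ∀ i j, 0 ≤ Q i j) :
    ∀ k i j, 0 ≤ (Q ^ k) i j := by
  intro k
  induction k with
  | zero => intro i j; simp [Matrix.one_apply]; split <;> norm_num
  | succ k ih =>
      intro i j
      rw [pow_succ, Matrix.mul_apply]
      exact Finset.sum_nonneg fun l _ => mul_nonneg (ih i l) (h l j)

lemma aux_rowsum_add (Q : Matrix ι ι ℝ) (a b : ℕ) (i : ι) :
    ∑ j, (Q ^ (a + b)) i j = ∑ l, (Q ^ a) i l * ∑ j, (Q ^ b) l j := by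
  simp only [pow_add, Matrix.mul_apply, Finset.mul_sum]
  rw [Finset.sum_comm]

lemma aux_rowsum_antitone (Q : Matrix ι ι ℝ) (h : ∀ i j, 0 ≤ Q i j)
    (hrow : ∀ i, ∑ j, Q i j ≤ 1) :
    ∀ {a b : ℕ}, a ≤ b → ∀ i, ∑ j, (Q ^ b) i j ≤ ∑ j, (Q ^ a) i j := by
  have step : ∀ a i, ∑ j, (Q ^ (a + 1)) i j ≤ ∑ j, (Q ^ a) i j := by
    intro a i
    rw [aux_rowsum_add Q a 1]
    calc ∑ l, (Q ^ a) i l * ∑ j, (Q ^ 1) l j ≤ ∑ l, (Q ^ a) i l * 1 := by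
          refine Finset.sum_le_sum fun l _ => ?_
          refine mul_le_mul_of_nonneg_left ?_ (aux_pow_nonneg Q h a i l)
          simpa using hrow l
      _ = ∑ l, (Q ^ a) i l := by simp
  intro a b hab i
  obtain ⟨d, rfl⟩ := Nat.exists_eq_add_of_le hab
  induction d with
  | zero => simp
  | succ d ih =>
      have : a + (d + 1) = (a + d) + 1 := by ring
      rw [this]
      exact le_trans (step (a + d) i) (ih (Nat.le_add_right _ _))

lemma aux_rowsum_nonneg (Q : Matrix ι ι ℝ) (h : ∀ i j, 0 ≤ Q i j) (k : ℕ) (i : ι) :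
    0 ≤ ∑ j, (Q ^ k) i j :=
  Finset.sum_nonneg fun j _ => aux_pow_nonneg Q h k i j

lemma aux_rowsum_zero (Q : Matrix ι ι ℝ) (i : ι) : ∑ j, (Q ^ 0) i j = 1 := by
  simp [Matrix.one_apply]

lemma aux_summable (Q : Matrix ι ι ℝ) (h : ∀ i j, 0 ≤ Q i j)
    (hrow : ∀ i, ∑ j, Q i j ≤ 1) (hshrink : ∀ i, ∃ k, ∑ j, (Q ^ k) i j < 1) :
    ∀ i, Summable (fun k : ℕ => ∑ j, (Q ^ k) i j) := by
  intro i
  have hne : Nonempty ι := ⟨i⟩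
  choose k hk using hshrink
  set m : ℕ := 1 + Finset.univ.sup k with hm
  have hm1 : 1 ≤ m := Nat.le_add_right 1 _
  have hkm : ∀ l, k l ≤ m := fun l =>
    le_trans (Finset.le_sup (Finset.mem_univ l)) (Nat.le_add_left _ _)
  have hfm : ∀ l, ∑ j, (Q ^ m) l j < 1 := fun l =>
    lt_of_le_of_lt (aux_rowsum_antitone Q h hrow (hkm l) l) (hk l)
  set c : ℝ := Finset.univ.sup' Finset.univ_nonempty (fun l => ∑ j, (Q ^ m) l j) with hc
  have hcm : ∀ l, ∑ j, (Q ^ m) l j ≤ c := fun l => by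
    exact Finset.le_sup' (fun l => ∑ j, (Q ^ m) l j) (Finset.mem_univ l)
  have hc1 : c < 1 := by
    rw [hc, Finset.sup'_lt_iff]
    exact fun l _ => hfm l
  have hc0 : 0 ≤ c := le_trans (aux_rowsum_nonneg Q h m i) (hcm i)
  have hgeo : ∀ q l, ∑ j, (Q ^ (m * q)) l j ≤ c ^ q := by
    intro q
    induction q with
    | zero => intro l; rw [Nat.mul_zero, pow_zero]; simp [Matrix.one_apply]
    | succ q ih =>
        intro l
        have : m * (q + 1) = m * q + m := by ring
        rw [this, aux_rowsum_add]
        calc ∑ l', (Q ^ (m * q)) l l' * ∑ j, (Q ^ m) l' j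
            ≤ ∑ l', (Q ^ (m * q)) l l' * c :=
              Finset.sum_le_sum fun l' _ =>
                mul_le_mul_of_nonneg_left (hcm l') (aux_pow_nonneg Q h _ l l')
          _ = (∑ l', (Q ^ (m * q)) l l') * c := by rw [Finset.sum_mul]
          _ ≤ c ^ q * c := mul_le_mul_of_nonneg_right (ih l) hc0
          _ = c ^ (q + 1) := by ring
  have hbound : ∀ N l, ∑ j, (Q ^ N) l j ≤ c ^ (N / m) := by
    intro N l
    have h1 : m * (N / m) ≤ N := by
      rw [Nat.mul_comm]; exact Nat.div_mul_le_self N m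
    exact le_trans (aux_rowsum_antitone Q h hrow h1 l) (hgeo (N / m) l)
  have key : ∀ M, ∑ N ∈ Finset.range (m * M), ∑ j, (Q ^ N) i j
      ≤ ∑ q ∈ Finset.range M, (m : ℝ) * c ^ q := by
    intro M
    induction M with
    | zero => simp
    | succ M ih =>
        have hsplit : ∑ N ∈ Finset.range (m * (M + 1)), ∑ j, (Q ^ N) i j
            = ∑ N ∈ Finset.range (m * M), (∑ j, (Q ^ N) i j)
              + ∑ N ∈ Finset.Ico (m * M) (m * (M + 1)), ∑ j, (Q ^ N) i j := by
          simp only [Finset.range_eq_Ico]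
          exact (Finset.sum_Ico_consecutive _ (Nat.zero_le _)
            (Nat.mul_le_mul_left m (Nat.le_succ M))).symm
        rw [hsplit, Finset.sum_range_succ]
        refine add_le_add ih ?_
        have hle : ∀ N ∈ Finset.Ico (m * M) (m * (M + 1)), ∑ j, (Q ^ N) i j ≤ c ^ M := by
          intro N hN
          exact le_trans
            (aux_rowsum_antitone Q h hrow (Finset.mem_Ico.mp hN).1 i) (hgeo M i)
        have hcard : (Finset.Ico (m * M) (m * (M + 1))).card = m := by
          rw [Nat.card_Ico, Nat.mul_succ, Nat.add_sub_cancel_left]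
        have := Finset.sum_le_card_nsmul _ _ _ hle
        rw [hcard] at this
        simpa [nsmul_eq_mul] using this
  have h1c : (0:ℝ) < 1 - c := by linarith
  have hgs : ∀ M, ∑ q ∈ Finset.range M, c ^ q ≤ (1 - c)⁻¹ := by
    intro M
    rw [geom_sum_eq (ne_of_lt hc1) M]
    have heq : (c ^ M - 1) / (c - 1) = (1 - c ^ M) / (1 - c) := by
      rw [← neg_div_neg_eq]; ring_nf
    rw [heq, inv_eq_one_div]
    have hM := pow_nonneg hc0 M
    gcongr
    linarith
  have hb : ∀ M, ∑ N ∈ Finset.range M, ∑ j, (Q ^ N) i j ≤ (m : ℝ) * (1 - c)⁻¹ := by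
    intro M
    calc ∑ N ∈ Finset.range M, ∑ j, (Q ^ N) i j
      ≤ ∑ N ∈ Finset.range (m * M), ∑ j, (Q ^ N) i j :=
        Finset.sum_le_sum_of_subset_of_nonneg
          (Finset.range_subset_range.mpr (Nat.le_mul_of_pos_left M (by omega)))
          (fun N _ _ => aux_rowsum_nonneg Q h N i)
    _ ≤ ∑ q ∈ Finset.range M, (m : ℝ) * c ^ q := key M
    _ = (m : ℝ) * ∑ q ∈ Finset.range M, c ^ q := by rw [← Finset.mul_sum]
    _ ≤ (m : ℝ) * (1 - c)⁻¹ :=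
          mul_le_mul_of_nonneg_left (hgs M) (by positivity)
  exact summable_of_sum_range_le (fun N => aux_rowsum_nonneg Q h N i) hb

lemma aux_entry_summable (Q : Matrix ι ι ℝ) (h : ∀ i j, 0 ≤ Q i j)
    (hrow : ∀ i, ∑ j, Q i j ≤ 1) (hshrink : ∀ i, ∃ k, ∑ j, (Q ^ k) i j < 1)
    (i j : ι) : Summable (fun k : ℕ => (Q ^ k) i j) :=
  Summable.of_nonneg_of_le (fun k => aux_pow_nonneg Q h k i j)
    (fun k => Finset.single_le_sum (fun l _ => aux_pow_nonneg Q h k i l) (Finset.mem_univ j))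
    (aux_summable Q h hrow hshrink i)

lemma aux_inv (Q : Matrix ι ι ℝ) (h : ∀ i j, 0 ≤ Q i j)
    (hrow : ∀ i, ∑ j, Q i j ≤ 1) (hshrink : ∀ i, ∃ k, ∑ j, (Q ^ k) i j < 1) :
    (1 - Q) * Matrix.of (fun i j => ∑' k : ℕ, (Q ^ k) i j) = 1 ∧
      (1 - Q)⁻¹ = Matrix.of (fun i j => ∑' k : ℕ, (Q ^ k) i j) := by
  have hsum := aux_entry_summable Q h hrow hshrink
  set S : Matrix ι ι ℝ := Matrix.of (fun i j => ∑' k : ℕ, (Q ^ k) i j) with hS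
  have hQS : Q * S = S - 1 := by
    ext i j
    rw [Matrix.mul_apply]
    calc ∑ l, Q i l * S l j = ∑ l, ∑' k : ℕ, Q i l * (Q ^ k) l j :=
          Finset.sum_congr rfl fun l _ => tsum_mul_left.symm
      _ = ∑' k : ℕ, ∑ l, Q i l * (Q ^ k) l j :=
          (Summable.tsum_finsetSum (fun l _ => (hsum l j).mul_left _)).symm
      _ = ∑' k : ℕ, (Q ^ (k + 1)) i j := by
          refine tsum_congr fun k => ?_
          rw [pow_succ', Matrix.mul_apply]
      _ = S i j - (1 : Matrix ι ι ℝ) i j := by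
          have h0 := Summable.tsum_eq_zero_add (hsum i j)
          simp only [pow_zero] at h0
          simp only [hS, Matrix.of_apply]
          linarith [h0]
  have hone : (1 - Q) * S = 1 := by
    rw [sub_mul, one_mul, hQS, sub_sub_cancel]
  exact ⟨hone, Matrix.inv_eq_right_inv hone⟩

lemma aux_subtype_sum (n : ℕ) (p : Fin n → Prop) [DecidablePred p] [Fintype (Subtype p)] (g : Fin n → ℝ) :
    ∑ l : Subtype p, g l.1 = ∑ l ∈ Finset.univ.filter p, g l := by
  classical
  exact (Finset.sum_subtype (Finset.univ.filter p) (by simp) g).symm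

lemma aux_subtype_sum_le (n : ℕ) (p : Fin n → Prop) [Fintype (Subtype p)] (g : Fin n → ℝ)
    (hg : ∀ x, 0 ≤ g x) : ∑ l : Subtype p, g l.1 ≤ ∑ l, g l := by
  classical
  rw [aux_subtype_sum n p g]
  exact Finset.sum_le_sum_of_subset_of_nonneg (Finset.filter_subset _ _) fun l _ _ => hg l

lemma aux_pow_rowsum (Q : Matrix ι ι ℝ) (hrow : ∀ i, ∑ j, Q i j = 1) :
    ∀ k i, ∑ j, (Q ^ k) i j = 1 := by
  intro k
  induction k with
  | zero => exact aux_rowsum_zero Q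
  | succ k ih =>
      intro i
      rw [aux_rowsum_add Q k 1]
      simp [pow_one, hrow, ih]

/-- expected steps to absorption. For an absorbing Markov
chain `P` on `Fin n` with transient block `Q` and fundamental matrix
`N = (I - Q)⁻¹`, the vector `t = N · c` (where `c` is the all-ones vector on the
transient states), i.e. `t i = ∑_{j} n_{i j}`, satisfies
`t i = ∑_{k=0}^∞ ∑_{j} (Q ^ k)_{i j}` (the series converging), as well as the
linear system `(I - Q) t = c`, equivalently `t = c + Q t`; `t i` is the expected
number of steps before absorption starting from transient state `i`. -/
theorem expected_steps_to_absorption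
    (n : ℕ) (P : Matrix (Fin n) (Fin n) ℝ)
    (hnonneg : ∀ i j, 0 ≤ P i j)
    (hrow : ∀ i, ∑ j, P i j = 1)
    (hreach : ∀ i : Fin n, ∃ (k : ℕ) (a : Fin n), P a a = 1 ∧ 0 < (P ^ k) i a)
    (Q : Matrix {x : Fin n // P x x ≠ 1} {x : Fin n // P x x ≠ 1} ℝ)
    (hQ : Q = P.submatrix Subtype.val Subtype.val)
    (t : {x : Fin n // P x x ≠ 1} → ℝ)
    (ht : t = (1 - Q)⁻¹.mulVec (fun _ => 1)) :
    (∀ i, t i = ∑ j, (1 - Q)⁻¹ i j) ∧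
      (∀ i, Summable (fun k : ℕ => ∑ j, (Q ^ k) i j) ∧
        t i = ∑' k : ℕ, ∑ j, (Q ^ k) i j) ∧
      (1 - Q).mulVec t = (fun _ => 1) ∧
      t = (fun _ => 1) + Q.mulVec t := by
  have hQe : ∀ a b, Q a b = P a.1 b.1 := fun a b => by rw [hQ]; rfl
  have hQnn : ∀ i j, 0 ≤ Q i j := fun i j => by rw [hQe]; exact hnonneg _ _
  have hQsub : ∀ k (i j : {x : Fin n // P x x ≠ 1}), (Q ^ k) i j ≤ (P ^ k) i.1 j.1 := by
    intro k
    induction k with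
    | zero =>
        intro i j
        by_cases hij : i = j
        · subst hij; simp [Matrix.one_apply]
        · rw [pow_zero, pow_zero, Matrix.one_apply_ne hij,
            Matrix.one_apply_ne (fun hv => hij (Subtype.ext hv))]
    | succ k ih =>
        intro i j
        rw [pow_succ, pow_succ, Matrix.mul_apply, Matrix.mul_apply]
        calc ∑ l, (Q ^ k) i l * Q l j
            ≤ ∑ l : {x : Fin n // P x x ≠ 1}, (P ^ k) i.1 l.1 * P l.1 j.1 := by
              refine Finset.sum_le_sum fun l _ => ?_
              rw [hQe]
              exact mul_le_mul_of_nonneg_right (ih i l) (hnonneg _ _)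
          _ ≤ ∑ l, (P ^ k) i.1 l * P l j.1 :=
              aux_subtype_sum_le n _ (fun l => (P ^ k) i.1 l * P l j.1)
                (fun l => mul_nonneg (aux_pow_nonneg P hnonneg k _ _) (hnonneg _ _))
  have hQrow : ∀ i, ∑ j, Q i j ≤ 1 := by
    intro i
    calc ∑ j, Q i j = ∑ j : {x : Fin n // P x x ≠ 1}, P i.1 j.1 :=
          Finset.sum_congr rfl fun j _ => hQe i j
      _ ≤ ∑ j, P i.1 j := aux_subtype_sum_le n _ _ (fun l => hnonneg i.1 l)
      _ = 1 := hrow i.1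
  have hshrink : ∀ i, ∃ k, ∑ j, (Q ^ k) i j < 1 := by
    intro i
    obtain ⟨k, a, haa, hpos⟩ := hreach i.1
    refine ⟨k, ?_⟩
    have hna : a ∉ Finset.univ.filter (fun x : Fin n => P x x ≠ 1) := by simp [haa]
    calc ∑ j, (Q ^ k) i j
        ≤ ∑ j : {x : Fin n // P x x ≠ 1}, (P ^ k) i.1 j.1 :=
          Finset.sum_le_sum fun j _ => hQsub k i j
      _ = ∑ j ∈ Finset.univ.filter (fun x : Fin n => P x x ≠ 1), (P ^ k) i.1 j :=
          aux_subtype_sum n _ _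
      _ ≤ ∑ j ∈ Finset.univ.erase a, (P ^ k) i.1 j :=
          Finset.sum_le_sum_of_subset_of_nonneg
            (fun x hx => Finset.mem_erase.mpr ⟨fun he => hna (he ▸ hx), Finset.mem_univ x⟩)
            (fun j _ _ => aux_pow_nonneg P hnonneg k _ _)
      _ = 1 - (P ^ k) i.1 a := by
          rw [Finset.sum_erase_eq_sub (Finset.mem_univ a), aux_pow_rowsum P hrow k i.1]
      _ < 1 := by linarith
  obtain ⟨hone, hinv⟩ := aux_inv Q hQnn hQrow hshrink
  have hsum := aux_summable Q hQnn hQrow hshrink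
  have hentry := aux_entry_summable Q hQnn hQrow hshrink
  have g1 : ∀ i, t i = ∑ j, (1 - Q)⁻¹ i j := by
    intro i
    rw [ht]
    simp [Matrix.mulVec, dotProduct]
  have g3 : (1 - Q).mulVec t = (fun _ => 1) := by
    rw [ht, Matrix.mulVec_mulVec]
    have hmul : (1 - Q) * (1 - Q)⁻¹ = 1 := by rw [hinv]; exact hone
    rw [hmul, Matrix.one_mulVec]
  refine ⟨g1, fun i => ⟨hsum i, ?_⟩, g3, ?_⟩
  · rw [g1 i, hinv]
    exact (Summable.tsum_finsetSum (fun j _ => hentry i j)).symm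
  · have h3 := g3
    rw [Matrix.sub_mulVec, Matrix.one_mulVec] at h3
    exact sub_eq_iff_eq_add.mp h3
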